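/- arXiv:1605.02600 — 2 statements merged into one kernel-verified Lean document; each statement's English description precedes it below -/
import Mathlib

section
/- Let A be an associative ring with elements a, b, P satisfying [b,a] = 1, P² = P, b·P = 0, P·a = 0. Define E(m,n) := (1/√(m! n!)) · aᵐ · P · bⁿ (coefficients in ℝ or ℂ). Then E(m,n) · E(k,l) = δ_{n,k} · E(m,l) for all natural numbers m, n, k, l. -/
private lemma comm_pow {A : Type*} [Ring A] (a b : A) (h : b * a - a * b = 1) :
    ∀ k : ℕ, b * a ^ (k + 1) = a ^ (k + 1) * b + (k + 1) • a ^ k := by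
  have hba : b * a = a * b + 1 := sub_eq_iff_eq_add'.mp h
  intro k
  induction k with
  | zero => simpa using hba
  | succ j ih =>
      have h0 : b * a ^ (j + 2) = (b * a ^ (j + 1)) * a := by
        rw [pow_succ, mul_assoc]
      rw [h0, ih, add_mul, smul_mul_assoc, ← pow_succ, mul_assoc, hba, mul_add, mul_one,
        ← mul_assoc, ← pow_succ]
      conv_rhs => rw [succ_nsmul]
      abel

private lemma key {A : Type*} [Ring A] (a b P : A)
    (h : b * a - a * b = 1) (hP : P * P = P) (hbP : b * P = 0) (hPa : P * a = 0) :
    ∀ n k : ℕ, P * b ^ n * a ^ k * P = if n = k then n.factorial • P else 0 := by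
  intro n
  induction n with
  | zero =>
      intro k
      cases k with
      | zero => simpa using hP
      | succ j =>
          simp only [pow_zero, mul_one, pow_succ']
          rw [← mul_assoc, hPa]
          simp
  | succ n ih =>
      intro k
      cases k with
      | zero =>
          simp [pow_succ, mul_assoc, hbP]
      | succ j =>
          have h1 : P * b ^ (n + 1) * a ^ (j + 1) * P
              = P * b ^ n * (b * a ^ (j + 1)) * P := by
            simp [pow_succ, mul_assoc]
          rw [h1, comm_pow a b h j]
          have expand : P * b ^ n * (a ^ (j + 1) * b + (j + 1) • a ^ j) * P
              = P * b ^ n * (a ^ (j + 1) * (b * P)) + (j + 1) • (P * b ^ n * a ^ j * P) := by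
            simp only [mul_add, add_mul, mul_smul_comm, smul_mul_assoc, mul_assoc]
          rw [expand, hbP]
          simp only [mul_zero, zero_add]
          rw [ih j]
          by_cases hnj : n = j
          · subst hnj
            simp [Nat.factorial_succ, smul_smul, mul_assoc]
          · simp [hnj]

/-- Matrix-unit multiplication law for the twisted Fock basis
`E(m,n) = (1/√(m! n!)) aᵐ P bⁿ`. -/
theorem twisted_fock_matrix_units {A : Type*} [Ring A] [Algebra ℂ A] (a b P : A)
    (h : b * a - a * b = 1) (hP : P * P = P) (hbP : b * P = 0) (hPa : P * a = 0)
    (E : ℕ → ℕ → A)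
    (hE : ∀ m n, E m n =
      ((Real.sqrt (m.factorial * n.factorial) : ℂ))⁻¹ • (a ^ m * P * b ^ n))
    (m n k l : ℕ) :
    E m n * E k l = if n = k then E m l else 0 := by
  rw [hE, hE, hE]
  rw [smul_mul_smul_comm]
  have hmid : (a ^ m * P * b ^ n) * (a ^ k * P * b ^ l)
      = a ^ m * (P * b ^ n * a ^ k * P) * b ^ l := by
    simp [mul_assoc]
  rw [hmid, key a b P h hP hbP hPa]
  by_cases hnk : n = k
  · subst hnk
    rw [if_pos rfl, if_pos rfl]
    rw [mul_smul_comm, smul_mul_assoc, ← Nat.cast_smul_eq_nsmul ℂ, smul_smul]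
    congr 1
    have hs : ∀ j : ℕ, (0:ℝ) < Real.sqrt j.factorial :=
      fun j => Real.sqrt_pos.mpr (by exact_mod_cast j.factorial_pos)
    have hsplit : ∀ i j : ℕ, Real.sqrt ((i.factorial : ℝ) * j.factorial)
        = Real.sqrt i.factorial * Real.sqrt j.factorial := by
      intro i j
      rw [← Real.sqrt_mul (by positivity)]
    have hsq : Real.sqrt n.factorial * Real.sqrt n.factorial = (n.factorial : ℝ) :=
      Real.mul_self_sqrt (by positivity)
    have hreal : (Real.sqrt ((m.factorial : ℝ) * n.factorial))⁻¹ *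
        (Real.sqrt ((n.factorial : ℝ) * l.factorial))⁻¹ * (n.factorial : ℝ)
        = (Real.sqrt ((m.factorial : ℝ) * l.factorial))⁻¹ := by
      rw [hsplit, hsplit, hsplit]
      have h1 := (hs m).ne'
      have h2 := (hs n).ne'
      have h3 := (hs l).ne'
      field_simp
      linear_combination (-1 : ℝ) * hsq
    exact_mod_cast congrArg (Complex.ofReal) hreal
  · simp [hnk]
end

section
/- Define on the polynomial ring ℂ[z, z̄] (polynomials in two commuting variables) the product f ⋆ g := Σ_{n=0}^∞ (ℏⁿ/n!) (∂_z̄ⁿ f)(∂_zⁿ g) (a finite sum for polynomials), where ℏ ∈ ℂ. Then ⋆ is associative: (f ⋆ g) ⋆ h = f ⋆ (g ⋆ h) for all polynomials f, g, h, with unit 1. -/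
open MvPolynomial Finset
namespace WickAux



noncomputable abbrev PD (i : Fin 2) : Module.End ℂ (MvPolynomial (Fin 2) ℂ) :=
  (pderiv i : Derivation ℂ (MvPolynomial (Fin 2) ℂ) (MvPolynomial (Fin 2) ℂ)).toLinearMap

lemma iter_eq (i : Fin 2) (n : ℕ) (f : MvPolynomial (Fin 2) ℂ) :
    (fun p => pderiv i p)^[n] f = (PD i ^ n) f := by
  rw [Module.End.pow_apply]; rfl

lemma pderiv_comm' (i j : Fin 2) (f : MvPolynomial (Fin 2) ℂ) :
    pderiv i (pderiv j f) = pderiv j (pderiv i f) := by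
  induction f using MvPolynomial.induction_on' with
  | add p q hp hq => simp [hp, hq]
  | monomial s a =>
    rcases eq_or_ne i j with rfl | hij
    · rfl
    · simp only [pderiv_monomial]
      rw [Finsupp.tsub_apply, Finsupp.tsub_apply, Finsupp.single_eq_of_ne hij,
        Finsupp.single_eq_of_ne (Ne.symm hij), tsub_right_comm]
      simp [Nat.sub_zero]
      ring_nf

lemma PD_pow_comm (i j : Fin 2) (m n : ℕ) (f : MvPolynomial (Fin 2) ℂ) :
    (PD i ^ m) ((PD j ^ n) f) = (PD j ^ n) ((PD i ^ m) f) := by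
  have h1 : ∀ g, (PD i) ((PD j ^ n) g) = (PD j ^ n) ((PD i) g) := by
    intro g
    induction n generalizing g with
    | zero => simp
    | succ n ih => rw [pow_succ, Module.End.mul_apply, Module.End.mul_apply, ih]
                   exact congrArg _ (pderiv_comm' i j g)
  induction m generalizing f with
  | zero => simp
  | succ m ih => rw [pow_succ, Module.End.mul_apply, Module.End.mul_apply, h1, ih]

lemma sumd_eq (s : Fin 2 →₀ ℕ) : (s.sum fun _ e => e) = s 0 + s 1 := by
  rw [Finsupp.sum_fintype _ _ (fun _ => rfl)]
  exact Fin.sum_univ_two _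

/-- key monomial vanishing -/
lemma PD_pow_monomial_zero (i : Fin 2) :
    ∀ n (s : Fin 2 →₀ ℕ) (a : ℂ), (s.sum fun _ e => e) < n →
    (PD i ^ n) (monomial s a) = 0 := by
  intro n
  induction n with
  | zero => intro s a h; omega
  | succ n ih =>
    intro s a h
    rw [pow_succ, Module.End.mul_apply]
    have : (PD i) (monomial s a) = pderiv i (monomial s a) := rfl
    rw [this, pderiv_monomial]
    rcases Nat.eq_zero_or_pos (s i) with h0 | h0
    · rw [h0]; push_cast; rw [mul_zero, map_zero, map_zero]
    · apply ih
      have hs := sumd_eq s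
      have hs' := sumd_eq (s - Finsupp.single i 1)
      rw [hs'] at *
      rw [Finsupp.tsub_apply, Finsupp.tsub_apply]
      fin_cases i <;> simp [Finsupp.single_apply] at * <;> omega

lemma PD_pow_zero_of_lt (i : Fin 2) (n : ℕ) (f : MvPolynomial (Fin 2) ℂ)
    (h : f.totalDegree < n) : (PD i ^ n) f = 0 := by
  conv_lhs => rw [f.as_sum]
  rw [map_sum]
  apply Finset.sum_eq_zero
  intro v hv
  exact PD_pow_monomial_zero i n v _ (lt_of_le_of_lt (le_totalDegree hv) h)

lemma totalDegree_pderiv_le (i : Fin 2) (f : MvPolynomial (Fin 2) ℂ) :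
    (pderiv i f).totalDegree ≤ f.totalDegree := by
  conv_lhs => rw [f.as_sum]
  rw [map_sum]
  refine MvPolynomial.totalDegree_finsetSum_le (fun v hv => ?_)
  rw [pderiv_monomial]
  refine le_trans (totalDegree_monomial_le _ _) (le_trans ?_ (le_totalDegree hv))
  have h1 : ((v - Finsupp.single i 1).sum fun _ => id) =
      (v - Finsupp.single i 1).sum fun _ e => e := rfl
  rw [h1, sumd_eq, sumd_eq, Finsupp.tsub_apply, Finsupp.tsub_apply]
  omega

lemma totalDegree_PD_pow_le (i : Fin 2) (n : ℕ) (f : MvPolynomial (Fin 2) ℂ) :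
    ((PD i ^ n) f).totalDegree ≤ f.totalDegree := by
  induction n generalizing f with
  | zero => simp
  | succ n ih =>
    rw [pow_succ, Module.End.mul_apply]
    exact le_trans (ih _) (totalDegree_pderiv_le i f)

lemma PD_mul (i : Fin 2) (a b : MvPolynomial (Fin 2) ℂ) :
    (PD i) (a * b) = (PD i) a * b + a * (PD i) b := pderiv_mul

lemma PD_succ_apply (i : Fin 2) (n : ℕ) (a : MvPolynomial (Fin 2) ℂ) :
    (PD i) ((PD i ^ n) a) = (PD i ^ (n + 1)) a := by
  rw [pow_succ', Module.End.mul_apply]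

/-- iterated Leibniz rule -/
lemma PD_pow_mul (i : Fin 2) (n : ℕ) (p q : MvPolynomial (Fin 2) ℂ) :
    (PD i ^ n) (p * q) =
      ∑ k ∈ range (n + 1), n.choose k • ((PD i ^ (n - k)) p * (PD i ^ k) q) := by
  induction n with
  | zero => simp [Finset.range]
  | succ n IH =>
    calc
      (PD i ^ (n + 1)) (p * q) =
          (PD i) (∑ k ∈ range n.succ,
              n.choose k • ((PD i ^ (n - k)) p * (PD i ^ k) q)) := by
        rw [← PD_succ_apply, IH]
      _ = (∑ k ∈ range n.succ,
            n.choose k • ((PD i ^ (n - k + 1)) p * (PD i ^ k) q)) +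
          ∑ k ∈ range n.succ,
            n.choose k • ((PD i ^ (n - k)) p * (PD i ^ (k + 1)) q) := by
        simp_rw [map_sum, map_nsmul, PD_mul, PD_succ_apply,
          smul_add, sum_add_distrib]
      _ = (∑ k ∈ range n.succ,
                n.choose k.succ • ((PD i ^ (n - k)) p * (PD i ^ (k + 1)) q)) +
              1 • ((PD i ^ (n + 1)) p * (PD i ^ 0) q) +
            ∑ k ∈ range n.succ, n.choose k • ((PD i ^ (n - k)) p * (PD i ^ (k + 1)) q) :=
        ?_
      _ = ((∑ k ∈ range n.succ, n.choose k • ((PD i ^ (n - k)) p * (PD i ^ (k + 1)) q)) +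
              ∑ k ∈ range n.succ,
                n.choose k.succ • ((PD i ^ (n - k)) p * (PD i ^ (k + 1)) q)) +
            1 • ((PD i ^ (n + 1)) p * (PD i ^ 0) q) := by
        rw [add_comm, add_assoc]
      _ = (∑ j ∈ range n.succ,
              (n + 1).choose (j + 1) • ((PD i ^ (n + 1 - (j + 1))) p * (PD i ^ (j + 1)) q)) +
            1 • ((PD i ^ (n + 1)) p * (PD i ^ 0) q) := by
        simp_rw [Nat.choose_succ_succ, Nat.succ_sub_succ, add_smul, sum_add_distrib]
      _ = ∑ k ∈ range (n + 1 + 1),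
            (n + 1).choose k • ((PD i ^ (n + 1 - k)) p * (PD i ^ k) q) := by
        rw [sum_range_succ' _ n.succ, Nat.choose_zero_right, tsub_zero]
    congr
    refine (sum_range_succ' _ _).trans (congr_arg₂ (· + ·) ?_ ?_)
    · rw [sum_range_succ, Nat.choose_succ_self, zero_smul, add_zero]
      refine sum_congr rfl fun k hk => ?_
      rw [mem_range] at hk
      have hnk : n - (k + 1) + 1 = n - k := by omega
      rw [hnk]
    · rw [Nat.choose_zero_right, tsub_zero]



lemma sum_triangle {M : Type*} [AddCommMonoid M] (N : ℕ) (F : ℕ → ℕ → M)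
    (hF : ∀ j l, N ≤ j + l → F j l = 0) :
    ∑ n ∈ range N, ∑ k ∈ range (n + 1), F k (n - k) =
    ∑ j ∈ range N, ∑ l ∈ range N, F j l := by
  have h1 : ∀ j ∈ range N, ∑ l ∈ range N, F j l = ∑ l ∈ range (N - j), F j l := by
    intro j hj
    rw [mem_range] at hj
    refine (Finset.sum_subset (range_subset_range.mpr (by omega)) ?_).symm
    intro l hl hl'
    rw [mem_range] at hl hl'
    exact hF j l (by omega)
  rw [Finset.sum_congr rfl h1]
  rw [Finset.sum_sigma' (range N) (fun n => range (n + 1)) (fun n k => F k (n - k)),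
      Finset.sum_sigma' (range N) (fun j => range (N - j)) (fun j l => F j l)]
  refine Finset.sum_nbij' (fun p => ⟨p.2, p.1 - p.2⟩) (fun p => ⟨p.1 + p.2, p.1⟩)
    ?_ ?_ ?_ ?_ ?_
  · rintro ⟨n, k⟩ hp
    simp only [Finset.mem_sigma, mem_range] at hp ⊢
    omega
  · rintro ⟨j, l⟩ hp
    simp only [Finset.mem_sigma, mem_range] at hp ⊢
    omega
  · rintro ⟨n, k⟩ hp
    simp only [Finset.mem_sigma, mem_range] at hp
    have : k + (n - k) = n := by omega
    simp [this]
  · rintro ⟨j, l⟩ hp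
    simp only [Finset.mem_sigma, mem_range] at hp
    simp
  · rintro ⟨n, k⟩ _
    rfl


lemma PD_pow_pow (i : Fin 2) (a b : ℕ) (x : MvPolynomial (Fin 2) ℂ) :
    (PD i ^ a) ((PD i ^ b) x) = (PD i ^ (a + b)) x := by
  rw [← Module.End.mul_apply, ← pow_add]

lemma scalar_id (ℏ : ℂ) (m j l : ℕ) :
    ℏ ^ (j + l) / (j + l).factorial * (ℏ ^ m / m.factorial * (((j + l).choose l : ℕ) : ℂ)) =
    ℏ ^ (j + m) / (j + m).factorial * (ℏ ^ l / l.factorial * (((j + m).choose j : ℕ) : ℂ)) := by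
  have h1 : (((j + l).choose l : ℕ) : ℂ) =
      ((j + l).factorial : ℂ) / ((l.factorial : ℂ) * (j.factorial : ℂ)) := by
    rw [Nat.cast_choose ℂ (Nat.le_add_left l j), Nat.add_sub_cancel]
  have h2 : (((j + m).choose j : ℕ) : ℂ) =
      ((j + m).factorial : ℂ) / ((j.factorial : ℂ) * (m.factorial : ℂ)) := by
    rw [Nat.cast_choose ℂ (Nat.le_add_right j m), Nat.add_sub_cancel_left]
  have n1 : ((j + l).factorial : ℂ) ≠ 0 := Nat.cast_ne_zero.mpr (Nat.factorial_ne_zero _)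
  have n2 : ((j + m).factorial : ℂ) ≠ 0 := Nat.cast_ne_zero.mpr (Nat.factorial_ne_zero _)
  have n3 : (j.factorial : ℂ) ≠ 0 := Nat.cast_ne_zero.mpr (Nat.factorial_ne_zero _)
  have n4 : (l.factorial : ℂ) ≠ 0 := Nat.cast_ne_zero.mpr (Nat.factorial_ne_zero _)
  have n5 : (m.factorial : ℂ) ≠ 0 := Nat.cast_ne_zero.mpr (Nat.factorial_ne_zero _)
  rw [h1, h2]
  field_simp
  ring

lemma S_assoc (ℏ : ℂ) (N : ℕ) (f g h : MvPolynomial (Fin 2) ℂ)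
    (hf : f.totalDegree < N) (hh : h.totalDegree < N) :
    (∑ n ∈ range N, (ℏ ^ n / n.factorial) •
      ((PD 1 ^ n) (∑ m ∈ range N, (ℏ ^ m / m.factorial) • ((PD 1 ^ m) f * (PD 0 ^ m) g))
        * (PD 0 ^ n) h)) =
    (∑ m ∈ range N, (ℏ ^ m / m.factorial) •
      ((PD 1 ^ m) f *
        (PD 0 ^ m) (∑ n ∈ range N, (ℏ ^ n / n.factorial) • ((PD 1 ^ n) g * (PD 0 ^ n) h)))) := by
  -- canonical F for the LHS
  set F : ℕ → ℕ → ℕ → MvPolynomial (Fin 2) ℂ := fun m l j =>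
    ((ℏ ^ (j + l) / (j + l).factorial) *
      ((ℏ ^ m / m.factorial) * (((j + l).choose l : ℕ) : ℂ))) •
      ((PD 1 ^ (j + m)) f * (PD 1 ^ l) ((PD 0 ^ m) g) * (PD 0 ^ (j + l)) h) with hF
  set G : ℕ → ℕ → ℕ → MvPolynomial (Fin 2) ℂ := fun n j mt =>
    ((ℏ ^ (j + mt) / (j + mt).factorial) *
      ((ℏ ^ n / n.factorial) * (((j + mt).choose j : ℕ) : ℂ))) •
      ((PD 1 ^ (j + mt)) f * (PD 0 ^ mt) ((PD 1 ^ n) g) * (PD 0 ^ (j + n)) h) with hG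
  have hL : (∑ n ∈ range N, (ℏ ^ n / n.factorial) •
      ((PD 1 ^ n) (∑ m ∈ range N, (ℏ ^ m / m.factorial) • ((PD 1 ^ m) f * (PD 0 ^ m) g))
        * (PD 0 ^ n) h)) =
      ∑ m ∈ range N, ∑ l ∈ range N, ∑ j ∈ range N, F m l j := by
    have expand : (∑ n ∈ range N, (ℏ ^ n / n.factorial) •
        ((PD 1 ^ n) (∑ m ∈ range N, (ℏ ^ m / m.factorial) • ((PD 1 ^ m) f * (PD 0 ^ m) g))
          * (PD 0 ^ n) h)) =
        ∑ n ∈ range N, ∑ m ∈ range N, ∑ k ∈ range (n + 1),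
          ((ℏ ^ n / n.factorial) * ((ℏ ^ m / m.factorial) * ((n.choose k : ℕ) : ℂ))) •
            ((PD 1 ^ (n - k + m)) f * (PD 1 ^ k) ((PD 0 ^ m) g) * (PD 0 ^ n) h) := by
      simp only [map_sum, map_smul, PD_pow_mul, PD_pow_pow, Finset.sum_mul, smul_mul_assoc,
        Finset.smul_sum, smul_smul, ← Nat.cast_smul_eq_nsmul ℂ]
    rw [expand, Finset.sum_comm]
    refine Finset.sum_congr rfl fun m _ => ?_
    rw [← sum_triangle N (fun l j => F m l j) ?_]
    · refine Finset.sum_congr rfl fun n _ => Finset.sum_congr rfl fun k hk => ?_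
      rw [mem_range] at hk
      have hnk : n - k + k = n := by omega
      show _ = F m k (n - k)
      rw [hF]
      simp only
      rw [hnk]
    · intro a b hab
      rw [hF]
      simp only
      rw [PD_pow_zero_of_lt 0 (b + a) h (by omega), mul_zero, smul_zero]
  have hR : (∑ m ∈ range N, (ℏ ^ m / m.factorial) •
      ((PD 1 ^ m) f *
        (PD 0 ^ m) (∑ n ∈ range N, (ℏ ^ n / n.factorial) • ((PD 1 ^ n) g * (PD 0 ^ n) h)))) =
      ∑ n ∈ range N, ∑ j ∈ range N, ∑ mt ∈ range N, G n j mt := by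
    have expand : (∑ m ∈ range N, (ℏ ^ m / m.factorial) •
        ((PD 1 ^ m) f *
          (PD 0 ^ m) (∑ n ∈ range N, (ℏ ^ n / n.factorial) • ((PD 1 ^ n) g * (PD 0 ^ n) h)))) =
        ∑ m ∈ range N, ∑ n ∈ range N, ∑ k ∈ range (m + 1),
          ((ℏ ^ m / m.factorial) * ((ℏ ^ n / n.factorial) * ((m.choose k : ℕ) : ℂ))) •
            ((PD 1 ^ m) f * (PD 0 ^ (m - k)) ((PD 1 ^ n) g) * (PD 0 ^ (k + n)) h) := by
      simp only [map_sum, map_smul, PD_pow_mul, PD_pow_pow, Finset.mul_sum, mul_smul_comm,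
        Finset.smul_sum, smul_smul, ← Nat.cast_smul_eq_nsmul ℂ, ← mul_assoc]
    rw [expand, Finset.sum_comm]
    refine Finset.sum_congr rfl fun n _ => ?_
    rw [← sum_triangle N (fun j mt => G n j mt) ?_]
    · refine Finset.sum_congr rfl fun m _ => Finset.sum_congr rfl fun k hk => ?_
      rw [mem_range] at hk
      have hnk : k + (m - k) = m := by omega
      show _ = G n k (m - k)
      rw [hG]
      simp only
      rw [hnk]
    · intro a b hab
      rw [hG]
      simp only
      rw [PD_pow_zero_of_lt 1 (a + b) f (by omega), zero_mul, zero_mul, smul_zero]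
  rw [hL, hR]
  -- reorder sums on the left : ∑_m ∑_l ∑_j F m l j = ∑_l ∑_j ∑_m F m l j
  rw [Finset.sum_comm]
  refine Finset.sum_congr rfl fun l _ => ?_
  rw [Finset.sum_comm]
  refine Finset.sum_congr rfl fun j _ => Finset.sum_congr rfl fun m _ => ?_
  rw [hF, hG]
  simp only
  rw [PD_pow_comm 1 0 l m g, scalar_id]

end WickAux

/-- The Wick-type star product `f ⋆ g = Σₙ (ℏⁿ/n!) (∂_z̄ⁿ f)(∂_zⁿ g)` on `ℂ[z, z̄]`,
where the variable `0` is `z` and the variable `1` is `z̄`. -/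
noncomputable def wickStar (ℏ : ℂ) (f g : MvPolynomial (Fin 2) ℂ) :
    MvPolynomial (Fin 2) ℂ :=
  ∑ n ∈ Finset.range (f.totalDegree + 1),
    (ℏ ^ n / n.factorial) •
      ((fun p => pderiv (1 : Fin 2) p)^[n] f * (fun p => pderiv (0 : Fin 2) p)^[n] g)

namespace WickAux

lemma wickStar_eq_S (ℏ : ℂ) (f g : MvPolynomial (Fin 2) ℂ) (N : ℕ)
    (hf : f.totalDegree < N) :
    wickStar ℏ f g =
      ∑ n ∈ range N, (ℏ ^ n / n.factorial) • ((PD 1 ^ n) f * (PD 0 ^ n) g) := by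
  unfold wickStar
  simp only [iter_eq]
  refine Finset.sum_subset (range_subset_range.mpr hf) fun x _ hx' => ?_
  rw [mem_range, not_lt] at hx'
  rw [PD_pow_zero_of_lt 1 x f (by omega), zero_mul, smul_zero]

lemma totalDegree_wickStar_le (ℏ : ℂ) (f g : MvPolynomial (Fin 2) ℂ) :
    (wickStar ℏ f g).totalDegree ≤ f.totalDegree + g.totalDegree := by
  unfold wickStar
  refine totalDegree_finsetSum_le fun n _ => ?_
  refine le_trans (totalDegree_smul_le _ _) ?_
  refine le_trans (totalDegree_mul _ _) ?_
  simp only [iter_eq]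
  exact add_le_add (totalDegree_PD_pow_le 1 n f) (totalDegree_PD_pow_le 0 n g)

end WickAux

open WickAux in
/-- The Wick star product is associative with unit `1`. -/
theorem wickStar_assoc_and_unital (ℏ : ℂ) :
    (∀ f g h : MvPolynomial (Fin 2) ℂ,
      wickStar ℏ (wickStar ℏ f g) h = wickStar ℏ f (wickStar ℏ g h)) ∧
    (∀ f : MvPolynomial (Fin 2) ℂ, wickStar ℏ f 1 = f ∧ wickStar ℏ 1 f = f) := by
  constructor
  · intro f g h
    set N : ℕ := f.totalDegree + g.totalDegree + h.totalDegree + 1 with hN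
    have hf : f.totalDegree < N := by omega
    have hg : g.totalDegree < N := by omega
    have hh : h.totalDegree < N := by omega
    have hfg : (wickStar ℏ f g).totalDegree < N :=
      lt_of_le_of_lt (totalDegree_wickStar_le ℏ f g) (by omega)
    have hgh : (wickStar ℏ g h).totalDegree < N :=
      lt_of_le_of_lt (totalDegree_wickStar_le ℏ g h) (by omega)
    rw [wickStar_eq_S ℏ (wickStar ℏ f g) h N hfg, wickStar_eq_S ℏ f g N hf,
      wickStar_eq_S ℏ f (wickStar ℏ g h) N hf, wickStar_eq_S ℏ g h N hg]
    exact S_assoc ℏ N f g h hf hh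
  · intro f
    constructor
    · unfold wickStar
      rw [Finset.sum_eq_single_of_mem 0 (by simp)]
      · simp
      · intro n _ hn
        have h1 : (fun p => pderiv (0 : Fin 2) p)^[n] (1 : MvPolynomial (Fin 2) ℂ) = 0 := by
          rw [iter_eq]
          exact PD_pow_zero_of_lt 0 n 1 (by simp [Nat.pos_of_ne_zero hn])
        rw [h1, mul_zero, smul_zero]
    · unfold wickStar
      simp
end
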